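/- arXiv:2010.12756 — 5 statements merged into one kernel-verified Lean document; each statement's English description precedes it below -/
import Mathlib

section
/- If A and B are bounded positive operators on a complex Hilbert space, then ‖A + iB‖ ≤ ‖A + B‖, where ‖·‖ is the operator norm. -/
open scoped InnerProductSpace
open ContinuousLinearMap

variable {H : Type*} [NormedAddCommGroup H] [InnerProductSpace ℂ H] [CompleteSpace H]

/-- The numerical radius of a bounded operator. -/
noncomputable def numRadius (T : H →L[ℂ] H) : ℝ :=
  ⨆ x : {x : H // ‖x‖ = 1}, ‖⟪T x.1, x.1⟫_ℂ‖

/-- The absolute value |A| = (A*A)^(1/2). -/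
noncomputable def opAbs (A : H →L[ℂ] H) : H →L[ℂ] H := CFC.sqrt (adjoint A * A)

/-- Real part of the Cartesian decomposition. -/
noncomputable def reP (T : H →L[ℂ] H) : H →L[ℂ] H := (2:ℂ)⁻¹ • (T + adjoint T)

/-- Imaginary part of the Cartesian decomposition. -/
noncomputable def imP (T : H →L[ℂ] H) : H →L[ℂ] H := (2*Complex.I:ℂ)⁻¹ • (T - adjoint T)

set_option synthInstance.maxHeartbeats 1000000
set_option maxHeartbeats 1000000

lemma op_cs (T : H →L[ℂ] H) (hT : T.IsPositive) (x y : H) :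
    ‖⟪T x, y⟫_ℂ‖ ≤ Real.sqrt (Complex.re ⟪T x, x⟫_ℂ) * Real.sqrt (Complex.re ⟪T y, y⟫_ℂ) := by
  set S := CFC.sqrt T with hSdef
  have hTpos : (0 : H →L[ℂ] H) ≤ T := (nonneg_iff_isPositive T).2 hT
  have hSS : S * S = T := CFC.sqrt_mul_sqrt_self T hTpos
  have hSpos : (0 : H →L[ℂ] H) ≤ S := CFC.sqrt_nonneg T
  have hSsa : IsSelfAdjoint S := ((nonneg_iff_isPositive S).1 hSpos).isSelfAdjoint
  have key : ∀ z w : H, ⟪T z, w⟫_ℂ = ⟪S z, S w⟫_ℂ := by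
    intro z w
    have : T z = S (S z) := by rw [← hSS]; rfl
    rw [this, ← hSsa.adjoint_eq, adjoint_inner_left, hSsa.adjoint_eq]
  rw [key x y, key x x, key y y]
  calc ‖⟪S x, S y⟫_ℂ‖ ≤ ‖S x‖ * ‖S y‖ := norm_inner_le_norm _ _
    _ = _ := by rw [norm_eq_sqrt_re_inner (𝕜 := ℂ) (S x), norm_eq_sqrt_re_inner (𝕜 := ℂ) (S y)]; rfl

theorem stmt_3 (A B : H →L[ℂ] H) (hA : A.IsPositive) (hB : B.IsPositive) :
    ‖A + Complex.I • B‖ ≤ ‖A + B‖ := by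
  have hABpos := hA.add hB
  refine opNorm_le_bound _ (norm_nonneg _) fun x => ?_
  set T := A + Complex.I • B with hT
  set y := T x with hy
  -- bound re⟪(A+B)z, z⟫ ≤ ‖A+B‖ ‖z‖²
  have hb : ∀ z : H, Complex.re ⟪(A+B) z, z⟫_ℂ ≤ ‖A+B‖ * ‖z‖^2 := by
    intro z
    calc Complex.re ⟪(A+B) z, z⟫_ℂ ≤ ‖⟪(A+B) z, z⟫_ℂ‖ := Complex.re_le_norm _
      _ ≤ ‖(A+B) z‖ * ‖z‖ := norm_inner_le_norm _ _
      _ ≤ (‖A+B‖ * ‖z‖) * ‖z‖ := by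
          exact mul_le_mul_of_nonneg_right (le_opNorm _ _) (norm_nonneg _)
      _ = ‖A+B‖ * ‖z‖^2 := by ring
  have key : ‖y‖^2 ≤ ‖A+B‖ * ‖x‖ * ‖y‖ := by
    have h1 : (‖y‖:ℝ)^2 = ‖⟪T x, y⟫_ℂ‖ := by
      rw [← hy, @inner_self_eq_norm_sq_to_K ℂ]
      simp [← Complex.ofReal_pow]
    have h2 : ⟪T x, y⟫_ℂ = ⟪A x, y⟫_ℂ + (-Complex.I) * ⟪B x, y⟫_ℂ := by
      rw [hT]
      simp [inner_add_left, inner_smul_left, mul_comm]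
    set ax := Complex.re ⟪A x, x⟫_ℂ
    set bx := Complex.re ⟪B x, x⟫_ℂ
    set ay := Complex.re ⟪A y, y⟫_ℂ
    set by' := Complex.re ⟪B y, y⟫_ℂ
    have hax : 0 ≤ ax := (Complex.le_def.mp (hA.inner_nonneg_left x)).1
    have hbx : 0 ≤ bx := (Complex.le_def.mp (hB.inner_nonneg_left x)).1
    have hay : 0 ≤ ay := (Complex.le_def.mp (hA.inner_nonneg_left y)).1
    have hby : 0 ≤ by' := (Complex.le_def.mp (hB.inner_nonneg_left y)).1
    have hca := op_cs A hA x y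
    have hcb := op_cs B hB x y
    have h3 : ‖⟪T x, y⟫_ℂ‖ ≤ Real.sqrt ax * Real.sqrt ay + Real.sqrt bx * Real.sqrt by' := by
      rw [h2]
      calc ‖⟪A x, y⟫_ℂ + (-Complex.I) * ⟪B x, y⟫_ℂ‖
          ≤ ‖⟪A x, y⟫_ℂ‖ + ‖(-Complex.I) * ⟪B x, y⟫_ℂ‖ := norm_add_le _ _
        _ = ‖⟪A x, y⟫_ℂ‖ + ‖⟪B x, y⟫_ℂ‖ := by simp
        _ ≤ _ := add_le_add hca hcb
    have h4 : Real.sqrt ax * Real.sqrt ay + Real.sqrt bx * Real.sqrt by'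
        ≤ Real.sqrt (ax + bx) * Real.sqrt (ay + by') := by
      have e1 : Real.sqrt ax ^ 2 = ax := Real.sq_sqrt hax
      have e2 : Real.sqrt bx ^ 2 = bx := Real.sq_sqrt hbx
      have e3 : Real.sqrt ay ^ 2 = ay := Real.sq_sqrt hay
      have e4 : Real.sqrt by' ^ 2 = by' := Real.sq_sqrt hby
      have e5 : Real.sqrt (ax+bx) ^ 2 = ax + bx := Real.sq_sqrt (by linarith)
      have e6 : Real.sqrt (ay+by') ^ 2 = ay + by' := Real.sq_sqrt (by linarith)
      nlinarith [Real.sqrt_nonneg ax, Real.sqrt_nonneg bx, Real.sqrt_nonneg ay,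
        Real.sqrt_nonneg by', Real.sqrt_nonneg (ax+bx), Real.sqrt_nonneg (ay+by'),
        sq_nonneg (Real.sqrt ax * Real.sqrt by' - Real.sqrt bx * Real.sqrt ay),
        mul_nonneg (Real.sqrt_nonneg (ax+bx)) (Real.sqrt_nonneg (ay+by'))]
    have habx : ax + bx = Complex.re ⟪(A+B) x, x⟫_ℂ := by simp [ax, bx, inner_add_left]
    have haby : ay + by' = Complex.re ⟪(A+B) y, y⟫_ℂ := by simp [ay, by', inner_add_left]
    have h5 : Real.sqrt (ax + bx) ≤ Real.sqrt ‖A+B‖ * ‖x‖ := by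
      rw [habx]
      calc Real.sqrt (Complex.re ⟪(A+B) x, x⟫_ℂ) ≤ Real.sqrt (‖A+B‖ * ‖x‖^2) :=
            Real.sqrt_le_sqrt (hb x)
        _ = Real.sqrt ‖A+B‖ * ‖x‖ := by
            rw [Real.sqrt_mul (norm_nonneg _), Real.sqrt_sq (norm_nonneg _)]
    have h6 : Real.sqrt (ay + by') ≤ Real.sqrt ‖A+B‖ * ‖y‖ := by
      rw [haby]
      calc Real.sqrt (Complex.re ⟪(A+B) y, y⟫_ℂ) ≤ Real.sqrt (‖A+B‖ * ‖y‖^2) :=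
            Real.sqrt_le_sqrt (hb y)
        _ = Real.sqrt ‖A+B‖ * ‖y‖ := by
            rw [Real.sqrt_mul (norm_nonneg _), Real.sqrt_sq (norm_nonneg _)]
    have hs : Real.sqrt ‖A+B‖ * Real.sqrt ‖A+B‖ = ‖A+B‖ := Real.mul_self_sqrt (norm_nonneg _)
    calc ‖y‖^2 = ‖⟪T x, y⟫_ℂ‖ := h1
      _ ≤ Real.sqrt ax * Real.sqrt ay + Real.sqrt bx * Real.sqrt by' := h3
      _ ≤ Real.sqrt (ax + bx) * Real.sqrt (ay + by') := h4
      _ ≤ (Real.sqrt ‖A+B‖ * ‖x‖) * (Real.sqrt ‖A+B‖ * ‖y‖) := by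
          apply mul_le_mul h5 h6 (Real.sqrt_nonneg _)
          positivity
      _ = ‖A+B‖ * ‖x‖ * ‖y‖ := by rw [mul_mul_mul_comm, hs]; ring
  rcases eq_or_lt_of_le (norm_nonneg y) with h0 | h0
  · have hz : ‖T x‖ = 0 := h0.symm
    rw [hz]
    positivity
  · have := (mul_le_mul_iff_of_pos_right h0).1 (by linarith [key] : ‖y‖ * ‖y‖ ≤ (‖A+B‖ * ‖x‖) * ‖y‖)
    simpa using this
end

section
/- If A and B are bounded self-adjoint operators on a complex Hilbert space, then (1/2)‖A² + B²‖ ≤ ω(A + iB)² ≤ ‖A² + B²‖, where ω denotes the numerical radius. -/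
open scoped InnerProductSpace
open ContinuousLinearMap

variable {H : Type*} [NormedAddCommGroup H] [InnerProductSpace ℂ H] [CompleteSpace H]

lemma abs_inner_clm_le (T : H →L[ℂ] H) (x y : H) :
    ‖⟪T x, y⟫_ℂ‖ ≤ ‖T x‖ * ‖y‖ := by
  exact norm_inner_le_norm _ _

lemma numRadius_bddAbove (T : H →L[ℂ] H) :
    BddAbove (Set.range fun x : {x : H // ‖x‖ = 1} => ‖⟪T x.1, x.1⟫_ℂ‖) := by
  refine ⟨‖T‖, ?_⟩
  rintro _ ⟨⟨x, hx⟩, rfl⟩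
  calc ‖⟪T x, x⟫_ℂ‖ ≤ ‖T x‖ * ‖x‖ := abs_inner_clm_le T x x
    _ ≤ (‖T‖ * ‖x‖) * ‖x‖ := by gcongr; exact T.le_opNorm x
    _ = ‖T‖ := by rw [hx]; ring

lemma le_numRadius (T : H →L[ℂ] H) {x : H} (hx : ‖x‖ = 1) :
    ‖⟪T x, x⟫_ℂ‖ ≤ numRadius T :=
  le_ciSup (numRadius_bddAbove T) (⟨x, hx⟩ : {x : H // ‖x‖ = 1})

lemma numRadius_nonneg (T : H →L[ℂ] H) : 0 ≤ numRadius T :=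
  Real.iSup_nonneg fun _ => norm_nonneg _

/-- For self-adjoint `A`, the quadratic form bound `|re ⟪A v, v⟫| ≤ r ‖v‖²`
from the bound on unit vectors. -/
lemma quad_bound {A : H →L[ℂ] H} (hA : IsSelfAdjoint A) {r : ℝ} (hr : 0 ≤ r)
    (h : ∀ x : H, ‖x‖ = 1 → |Complex.re ⟪A x, x⟫_ℂ| ≤ r) (v : H) :
    |Complex.re ⟪A v, v⟫_ℂ| ≤ r * ‖v‖ ^ 2 := by
  rcases eq_or_ne v 0 with rfl | hv
  · simp
  · have hnv : ‖v‖ ≠ 0 := norm_ne_zero_iff.mpr hv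
    set u : H := (‖v‖⁻¹ : ℂ) • v with hu
    have hu1 : ‖u‖ = 1 := by
      rw [hu, norm_smul]
      simp [norm_inv, hnv]
    have hvu : v = (‖v‖ : ℂ) • u := by
      rw [hu, smul_smul]
      rw [mul_inv_cancel₀ (by exact_mod_cast hnv)]
      simp
    have heq : ⟪A v, v⟫_ℂ = ((‖v‖ * ‖v‖ : ℝ) : ℂ) * ⟪A u, u⟫_ℂ := by
      conv_lhs => rw [hvu]
      rw [map_smul, inner_smul_left, inner_smul_right]
      simp [Complex.conj_ofReal]
      push_cast
      ring
    rw [heq, Complex.re_ofReal_mul, abs_mul, abs_of_nonneg (mul_self_nonneg _)]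
    have := h u hu1
    nlinarith [norm_nonneg v, abs_nonneg (Complex.re ⟪A u, u⟫_ℂ)]

/-- Norm bound from quadratic form bound, via (real) polarization. -/
lemma norm_le_of_quad {A : H →L[ℂ] H} (hA : IsSelfAdjoint A) {r : ℝ} (hr : 0 ≤ r)
    (h : ∀ v : H, |Complex.re ⟪A v, v⟫_ℂ| ≤ r * ‖v‖ ^ 2) : ‖A‖ ≤ r := by
  have hsym : (A : H →ₗ[ℂ] H).IsSymmetric := hA.isSymmetric
  -- real part bound via real polarization
  have key : ∀ x y : H, Complex.re ⟪A x, y⟫_ℂ ≤ r * (‖x‖ ^ 2 + ‖y‖ ^ 2) / 2 := by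
    intro x y
    have hAyx : ⟪A y, x⟫_ℂ = (starRingEnd ℂ) ⟪A x, y⟫_ℂ := by
      have h1 : ⟪A y, x⟫_ℂ = ⟪y, A x⟫_ℂ := hsym y x
      have h2 : (starRingEnd ℂ) ⟪A x, y⟫_ℂ = ⟪y, A x⟫_ℂ := inner_conj_symm y (A x)
      rw [h1, h2]
    have e1 : ⟪A (x + y), x + y⟫_ℂ - ⟪A (x - y), x - y⟫_ℂ
        = 2 * (⟪A x, y⟫_ℂ + (starRingEnd ℂ) ⟪A x, y⟫_ℂ) := by
      rw [map_add, map_sub, inner_add_left, inner_add_right, inner_add_right,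
        inner_sub_left, inner_sub_right, inner_sub_right, ← hAyx]
      ring
    have e2 : Complex.re ⟪A (x + y), x + y⟫_ℂ - Complex.re ⟪A (x - y), x - y⟫_ℂ
        = 4 * Complex.re ⟪A x, y⟫_ℂ := by
      have := congrArg Complex.re e1
      rw [Complex.sub_re] at this
      rw [this, Complex.add_conj]
      simp [Complex.mul_re]
      ring
    have h1 := h (x + y)
    have h2 := h (x - y)
    have hpar : ‖x + y‖ ^ 2 + ‖x - y‖ ^ 2 = 2 * (‖x‖ ^ 2 + ‖y‖ ^ 2) := by
      have := parallelogram_law_with_norm ℂ x y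
      nlinarith [this]
    have hb1 : Complex.re ⟪A (x + y), x + y⟫_ℂ ≤ r * ‖x + y‖ ^ 2 :=
      le_trans (le_abs_self _) h1
    have hb2 : -(r * ‖x - y‖ ^ 2) ≤ Complex.re ⟪A (x - y), x - y⟫_ℂ :=
      neg_le_of_abs_le h2
    nlinarith [hb1, hb2, hpar, e2]
  refine A.opNorm_le_bound hr fun v => ?_
  rcases eq_or_ne (A v) 0 with hAv | hAv
  · simp [hAv, mul_nonneg hr (norm_nonneg v)]
  · have hnAv : (0 : ℝ) < ‖A v‖ := norm_pos_iff.mpr hAv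
    set y : H := ((‖v‖ / ‖A v‖ : ℝ) : ℂ) • (A v) with hy
    have hyn : ‖y‖ = ‖v‖ := by
      rw [hy, norm_smul]
      rw [Complex.norm_real, Real.norm_eq_abs, abs_div,
        abs_of_nonneg (norm_nonneg v), abs_of_pos hnAv,
        div_mul_cancel₀ _ (ne_of_gt hnAv)]
    have hrey : Complex.re ⟪A v, y⟫_ℂ = (‖v‖ / ‖A v‖) * ‖A v‖ ^ 2 := by
      rw [hy, inner_smul_right]
      have hin : ⟪A v, A v⟫_ℂ = ((‖A v‖ ^ 2 : ℝ) : ℂ) := by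
        rw [inner_self_eq_norm_sq_to_K]; norm_num
      rw [hin, ← Complex.ofReal_mul, Complex.ofReal_re]
    have hk := key v y
    rw [hrey, hyn] at hk
    have hmain : ‖v‖ * ‖A v‖ ≤ r * ‖v‖ ^ 2 := by
      have hexp : ‖v‖ / ‖A v‖ * ‖A v‖ ^ 2 = ‖v‖ * ‖A v‖ := by
        field_simp
      rw [hexp] at hk
      nlinarith [hk]
    rcases eq_or_ne v 0 with rfl | hv
    · simp at hAv
    · have hnv : (0 : ℝ) < ‖v‖ := norm_pos_iff.mpr hv
      nlinarith [hmain]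

theorem stmt_4 (A B : H →L[ℂ] H) (hA : IsSelfAdjoint A) (hB : IsSelfAdjoint B) :
    (1/2) * ‖A ^ 2 + B ^ 2‖ ≤ numRadius (A + Complex.I • B) ^ 2 ∧
      numRadius (A + Complex.I • B) ^ 2 ≤ ‖A ^ 2 + B ^ 2‖ := by
  set T := A + Complex.I • B with hT
  set r := numRadius T with hrdef
  have hr0 : 0 ≤ r := numRadius_nonneg T
  have hsymA : (A : H →ₗ[ℂ] H).IsSymmetric := hA.isSymmetric
  have hsymB : (B : H →ₗ[ℂ] H).IsSymmetric := hB.isSymmetric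
  have himA : ∀ v : H, Complex.im ⟪A v, v⟫_ℂ = 0 := by
    intro v
    refine Complex.conj_eq_iff_im.mp ?_
    have h2 : (starRingEnd ℂ) ⟪A v, v⟫_ℂ = ⟪v, A v⟫_ℂ := inner_conj_symm v (A v)
    rw [h2]; exact (hsymA v v).symm
  have himB : ∀ v : H, Complex.im ⟪B v, v⟫_ℂ = 0 := by
    intro v
    refine Complex.conj_eq_iff_im.mp ?_
    have h2 : (starRingEnd ℂ) ⟪B v, v⟫_ℂ = ⟪v, B v⟫_ℂ := inner_conj_symm v (B v)
    rw [h2]; exact (hsymB v v).symm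
  -- |⟪Tx,x⟫|² = a² + b²
  have habs : ∀ x : H, ‖⟪T x, x⟫_ℂ‖ ^ 2
      = Complex.re ⟪A x, x⟫_ℂ ^ 2 + Complex.re ⟪B x, x⟫_ℂ ^ 2 := by
    intro x
    have hTx : ⟪T x, x⟫_ℂ = ⟪A x, x⟫_ℂ - Complex.I * ⟪B x, x⟫_ℂ := by
      rw [hT]
      simp only [ContinuousLinearMap.add_apply, ContinuousLinearMap.smul_apply,
        inner_add_left, inner_smul_left, Complex.conj_I]
      ring
    rw [Complex.sq_norm, Complex.normSq_apply, hTx]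
    simp only [Complex.sub_re, Complex.sub_im, Complex.mul_re, Complex.mul_im,
      Complex.I_re, Complex.I_im, himA x, himB x]
    ring
  rcases isEmpty_or_nonempty {x : H // ‖x‖ = 1} with hemp | hne
  · -- degenerate case: no unit vectors, so H is trivial
    have hzero : ∀ v : H, v = 0 := by
      intro v
      by_contra hv
      have hnv : ‖v‖ ≠ 0 := norm_ne_zero_iff.mpr hv
      exact hemp.false ⟨(‖v‖⁻¹ : ℂ) • v, by
        rw [norm_smul]; simp [norm_inv, hnv]⟩
    have hAB : A ^ 2 + B ^ 2 = 0 := by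
      ext v; rw [hzero v]; simp
    have hnr : numRadius T = 0 := by
      rw [numRadius, Real.iSup_of_isEmpty]
    rw [hAB, hrdef, hnr]
    norm_num
  · constructor
    · -- lower bound
      have hbA : ∀ x : H, ‖x‖ = 1 → |Complex.re ⟪A x, x⟫_ℂ| ≤ r := by
        intro x hx
        have h1 := le_numRadius T hx
        have h2 := habs x
        have hsq : Complex.re ⟪A x, x⟫_ℂ ^ 2 ≤ r ^ 2 := by
          nlinarith [sq_nonneg (Complex.re ⟪B x, x⟫_ℂ), norm_nonneg ⟪T x, x⟫_ℂ]
        calc |Complex.re ⟪A x, x⟫_ℂ| = Real.sqrt (Complex.re ⟪A x, x⟫_ℂ ^ 2) :=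
              (Real.sqrt_sq_eq_abs _).symm
          _ ≤ Real.sqrt (r ^ 2) := Real.sqrt_le_sqrt hsq
          _ = r := by rw [Real.sqrt_sq hr0]
      have hbB : ∀ x : H, ‖x‖ = 1 → |Complex.re ⟪B x, x⟫_ℂ| ≤ r := by
        intro x hx
        have h1 := le_numRadius T hx
        have h2 := habs x
        have hsq : Complex.re ⟪B x, x⟫_ℂ ^ 2 ≤ r ^ 2 := by
          nlinarith [sq_nonneg (Complex.re ⟪A x, x⟫_ℂ), norm_nonneg ⟪T x, x⟫_ℂ]
        calc |Complex.re ⟪B x, x⟫_ℂ| = Real.sqrt (Complex.re ⟪B x, x⟫_ℂ ^ 2) :=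
              (Real.sqrt_sq_eq_abs _).symm
          _ ≤ Real.sqrt (r ^ 2) := Real.sqrt_le_sqrt hsq
          _ = r := by rw [Real.sqrt_sq hr0]
      have hnA : ‖A‖ ≤ r := norm_le_of_quad hA hr0 (quad_bound hA hr0 hbA)
      have hnB : ‖B‖ ≤ r := norm_le_of_quad hB hr0 (quad_bound hB hr0 hbB)
      have hA2 : ‖A ^ 2‖ = ‖A‖ * ‖A‖ := by
        have h : A ^ 2 = star A * A := by rw [hA.star_eq, sq]
        rw [h, CStarRing.norm_star_mul_self]
      have hB2 : ‖B ^ 2‖ = ‖B‖ * ‖B‖ := by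
        have h : B ^ 2 = star B * B := by rw [hB.star_eq, sq]
        rw [h, CStarRing.norm_star_mul_self]
      have htri : ‖A ^ 2 + B ^ 2‖ ≤ ‖A ^ 2‖ + ‖B ^ 2‖ := norm_add_le _ _
      rw [hA2, hB2] at htri
      nlinarith [norm_nonneg A, norm_nonneg B]
    · -- upper bound
      set c := ‖A ^ 2 + B ^ 2‖ with hc
      have hc0 : 0 ≤ c := norm_nonneg _
      have hbound : ∀ x : H, ‖x‖ = 1 → ‖⟪T x, x⟫_ℂ‖ ≤ Real.sqrt c := by
        intro x hx
        have h2 := habs x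
        have hAx : |Complex.re ⟪A x, x⟫_ℂ| ≤ ‖A x‖ := by
          calc |Complex.re ⟪A x, x⟫_ℂ| ≤ ‖⟪A x, x⟫_ℂ‖ := Complex.abs_re_le_norm _
            _ ≤ ‖A x‖ * ‖x‖ := abs_inner_clm_le A x x
            _ = ‖A x‖ := by rw [hx, mul_one]
        have hBx : |Complex.re ⟪B x, x⟫_ℂ| ≤ ‖B x‖ := by
          calc |Complex.re ⟪B x, x⟫_ℂ| ≤ ‖⟪B x, x⟫_ℂ‖ := Complex.abs_re_le_norm _
            _ ≤ ‖B x‖ * ‖x‖ := abs_inner_clm_le B x x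
            _ = ‖B x‖ := by rw [hx, mul_one]
        have hsum : ‖A x‖ ^ 2 + ‖B x‖ ^ 2 = Complex.re ⟪(A ^ 2 + B ^ 2) x, x⟫_ℂ := by
          have hA' : ⟪(A ^ 2) x, x⟫_ℂ = ⟪A x, A x⟫_ℂ := by
            have hsq : (A ^ 2) x = A (A x) := by rw [sq]; rfl
            rw [hsq]
            exact hsymA (A x) x
          have hB' : ⟪(B ^ 2) x, x⟫_ℂ = ⟪B x, B x⟫_ℂ := by
            have hsq : (B ^ 2) x = B (B x) := by rw [sq]; rfl
            rw [hsq]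
            exact hsymB (B x) x
          have hadd : ⟪(A ^ 2 + B ^ 2) x, x⟫_ℂ = ⟪A x, A x⟫_ℂ + ⟪B x, B x⟫_ℂ := by
            rw [ContinuousLinearMap.add_apply, inner_add_left, hA', hB']
          rw [hadd, inner_self_eq_norm_sq_to_K, inner_self_eq_norm_sq_to_K]
          simp [← Complex.ofReal_pow]
        have hlast : Complex.re ⟪(A ^ 2 + B ^ 2) x, x⟫_ℂ ≤ c := by
          calc Complex.re ⟪(A ^ 2 + B ^ 2) x, x⟫_ℂ
              ≤ ‖⟪(A ^ 2 + B ^ 2) x, x⟫_ℂ‖ :=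
                le_trans (le_abs_self _) (Complex.abs_re_le_norm _)
            _ ≤ ‖(A ^ 2 + B ^ 2) x‖ * ‖x‖ := abs_inner_clm_le _ x x
            _ ≤ (c * ‖x‖) * ‖x‖ := by gcongr; exact (A ^ 2 + B ^ 2).le_opNorm x
            _ = c := by rw [hx]; ring
        have habs2 : ‖⟪T x, x⟫_ℂ‖ ^ 2 ≤ c := by
          rw [h2]
          nlinarith [hAx, hBx, abs_nonneg (Complex.re ⟪A x, x⟫_ℂ),
            abs_nonneg (Complex.re ⟪B x, x⟫_ℂ), sq_abs (Complex.re ⟪A x, x⟫_ℂ),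
            sq_abs (Complex.re ⟪B x, x⟫_ℂ), norm_nonneg (A x), norm_nonneg (B x),
            hsum, hlast]
        calc ‖⟪T x, x⟫_ℂ‖
            = Real.sqrt (‖⟪T x, x⟫_ℂ‖ ^ 2) := by
              rw [Real.sqrt_sq (norm_nonneg _)]
          _ ≤ Real.sqrt c := Real.sqrt_le_sqrt habs2
      have hrle : r ≤ Real.sqrt c := by
        rw [hrdef, numRadius]
        exact ciSup_le fun x => hbound x.1 x.2
      calc r ^ 2 ≤ Real.sqrt c ^ 2 := by
            have := Real.sqrt_nonneg c
            nlinarith [hrle]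
        _ = c := Real.sq_sqrt hc0
end

section
/- For any bounded linear operators A and B on a complex Hilbert space, ω(A + B) ≤ (1/√2) · ω((|A| + |A*|) + i(|B| + |B*|)). -/
open scoped InnerProductSpace
open ContinuousLinearMap

variable {H : Type*} [NormedAddCommGroup H] [InnerProductSpace ℂ H] [CompleteSpace H]

set_option maxHeartbeats 1000000
set_option synthInstance.maxHeartbeats 400000
set_option linter.unusedSectionVars false

open scoped NNReal

section Aux

lemma my_mul_pow_intertwine (a b : H →L[ℂ] H) (n : ℕ) : a * (b*a)^n = (a*b)^n * a := by
  induction n with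
  | zero => simp
  | succ n ih => rw [pow_succ, pow_succ, ← mul_assoc, ih, mul_assoc, mul_assoc, mul_assoc]

lemma my_aeval_intertwine (a b : H →L[ℂ] H) (q : Polynomial ℝ) :
    a * Polynomial.aeval (b * a) q = Polynomial.aeval (a * b) q * a := by
  rw [Polynomial.aeval_eq_sum_range, Polynomial.aeval_eq_sum_range, Finset.mul_sum,
    Finset.sum_mul]
  exact Finset.sum_congr rfl fun i _ => by
    rw [mul_smul_comm, smul_mul_assoc, my_mul_pow_intertwine]

lemma my_exists_poly_approx (f : ℝ → ℝ) (hf : Continuous f) (M : ℝ) {ε : ℝ} (hε : 0 < ε) :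
    ∃ q : Polynomial ℝ, ∀ s ∈ Set.Icc (-M) M, |f s - q.eval s| ≤ ε := by
  let F : C(Set.Icc (-M) M, ℝ) := ⟨fun u => f u, hf.comp continuous_subtype_val⟩
  have hcl : F ∈ closure ((polynomialFunctions (Set.Icc (-M) M)) : Set C(Set.Icc (-M) M, ℝ)) := by
    rw [← Subalgebra.topologicalClosure_coe, polynomialFunctions_closure_eq_top]
    simp
  obtain ⟨G, hG, hdist⟩ := Metric.mem_closure_iff.mp hcl ε hε
  rw [polynomialFunctions_coe] at hG
  obtain ⟨q, rfl⟩ := hG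
  refine ⟨q, fun s hs => ?_⟩
  have h1 := ContinuousMap.dist_apply_le_dist (f := F) (g := q.toContinuousMapOnAlgHom _) ⟨s, hs⟩
  have h2 : dist (F ⟨s, hs⟩) ((q.toContinuousMapOnAlgHom _) ⟨s, hs⟩) ≤ ε := h1.trans hdist.le
  simpa [Real.dist_eq, F, Polynomial.toContinuousMapOn, Polynomial.toContinuousMap] using h2

lemma my_cfc_intertwine (a : H →L[ℂ] H) (f : ℝ → ℝ) (hf : Continuous f) :
    a * cfc f (adjoint a * a) = cfc f (a * adjoint a) * a := by
  have hx : IsSelfAdjoint (adjoint a * a) := by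
    rw [← star_eq_adjoint]; exact IsSelfAdjoint.star_mul_self a
  have hy : IsSelfAdjoint (a * adjoint a) := by
    rw [← star_eq_adjoint]; exact IsSelfAdjoint.mul_star_self a
  set x := adjoint a * a with hxdef
  set y := a * adjoint a with hydef
  set M : ℝ := max (‖x‖ * ‖(1 : H →L[ℂ] H)‖) (‖y‖ * ‖(1 : H →L[ℂ] H)‖) with hM
  have hsx : spectrum ℝ x ⊆ Set.Icc (-M) M := by
    intro s hs
    have := spectrum.subset_closedBall_norm_mul (𝕜 := ℝ) x hs
    rw [Metric.mem_closedBall, Real.dist_eq, sub_zero] at this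
    exact Set.mem_Icc.mpr (abs_le.mp (this.trans (le_max_left _ _)))
  have hsy : spectrum ℝ y ⊆ Set.Icc (-M) M := by
    intro s hs
    have := spectrum.subset_closedBall_norm_mul (𝕜 := ℝ) y hs
    rw [Metric.mem_closedBall, Real.dist_eq, sub_zero] at this
    exact Set.mem_Icc.mpr (abs_le.mp (this.trans (le_max_right _ _)))
  have key : ∀ ε : ℝ, 0 < ε → ‖a * cfc f x - cfc f y * a‖ ≤ ε * (2 * ‖a‖) := by
    intro ε hε
    obtain ⟨q, hq⟩ := my_exists_poly_approx f hf M hε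
    have h1 : ‖cfc f x - cfc q.eval x‖ ≤ ε := by
      rw [← cfc_sub f q.eval x hf.continuousOn q.continuous.continuousOn]
      exact norm_cfc_le hε.le fun s hs => by
        rw [Real.norm_eq_abs]; exact hq s (hsx hs)
    have h2 : ‖cfc f y - cfc q.eval y‖ ≤ ε := by
      rw [← cfc_sub f q.eval y hf.continuousOn q.continuous.continuousOn]
      exact norm_cfc_le hε.le fun s hs => by
        rw [Real.norm_eq_abs]; exact hq s (hsy hs)
    have h3 : a * cfc q.eval x = cfc q.eval y * a := by
      rw [cfc_polynomial q x hx, cfc_polynomial q y hy, hxdef, hydef, my_aeval_intertwine]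
    have h4 : a * cfc f x - cfc f y * a
        = a * (cfc f x - cfc q.eval x) + (cfc q.eval y - cfc f y) * a := by
      rw [mul_sub, sub_mul, ← h3]; abel
    calc ‖a * cfc f x - cfc f y * a‖
        ≤ ‖a * (cfc f x - cfc q.eval x)‖ + ‖(cfc q.eval y - cfc f y) * a‖ := by
          rw [h4]; exact norm_add_le _ _
      _ ≤ ‖a‖ * ε + ε * ‖a‖ := by
          refine add_le_add ((norm_mul_le _ _).trans
            (mul_le_mul_of_nonneg_left h1 (norm_nonneg a))) ((norm_mul_le _ _).trans
            (mul_le_mul_of_nonneg_right (by rw [norm_sub_rev]; exact h2) (norm_nonneg a)))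
      _ = ε * (2 * ‖a‖) := by ring
  have hz : ‖a * cfc f x - cfc f y * a‖ ≤ 0 := by
    refine le_of_forall_pos_le_add fun ε hε => ?_
    have h2a : (0:ℝ) < 2 * ‖a‖ + 1 := by positivity
    have h := key (ε / (2 * ‖a‖ + 1)) (by positivity)
    have h5 : ε / (2 * ‖a‖ + 1) * (2 * ‖a‖) ≤ ε := by
      rw [div_mul_eq_mul_div, div_le_iff₀ h2a]
      nlinarith [hε.le]
    linarith
  have := le_antisymm hz (norm_nonneg _)
  rwa [norm_eq_zero, sub_eq_zero] at this

lemma my_adjoint_mul_self_nonneg (a : H →L[ℂ] H) : 0 ≤ adjoint a * a := by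
  rw [← star_eq_adjoint]; exact star_mul_self_nonneg a

lemma my_mul_adjoint_self_nonneg (a : H →L[ℂ] H) : 0 ≤ a * adjoint a := by
  rw [← star_eq_adjoint]; exact mul_star_self_nonneg a

lemma my_sqrt_eq_real_cfc (a : H →L[ℂ] H) (ha : 0 ≤ a) : CFC.sqrt a = cfc Real.sqrt a := by
  rw [CFC.sqrt_eq_cfc, cfc_nnreal_eq_real _ _ ha]
  exact cfc_congr fun x hx => by
    show ((NNReal.sqrt x.toNNReal : ℝ≥0) : ℝ) = Real.sqrt x
    rw [Real.coe_sqrt, Real.coe_toNNReal x (spectrum_nonneg_of_nonneg ha hx)]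

lemma my_opAbs_eq_cfc (A : H →L[ℂ] H) : opAbs A = cfc Real.sqrt (adjoint A * A) :=
  my_sqrt_eq_real_cfc _ (my_adjoint_mul_self_nonneg A)

lemma my_opAbs_adjoint_eq_cfc (A : H →L[ℂ] H) :
    opAbs (adjoint A) = cfc Real.sqrt (A * adjoint A) := by
  rw [my_opAbs_eq_cfc, adjoint_adjoint]

lemma my_opAbs_nonneg (A : H →L[ℂ] H) : 0 ≤ opAbs A := CFC.sqrt_nonneg _

lemma my_kato_op (A : H →L[ℂ] H) {ε : ℝ} (hε : 0 < ε) :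
    A + adjoint A ≤ opAbs A + opAbs (adjoint A) + ε • (1 : H →L[ℂ] H) := by
  have ht : (0:H →L[ℂ] H) ≤ adjoint A * A := my_adjoint_mul_self_nonneg A
  have ht' : (0:H →L[ℂ] H) ≤ A * adjoint A := my_mul_adjoint_self_nonneg A
  have hxsa : IsSelfAdjoint (adjoint A * A) := IsSelfAdjoint.of_nonneg ht
  have hysa : IsSelfAdjoint (A * adjoint A) := IsSelfAdjoint.of_nonneg ht'
  set t : H →L[ℂ] H := adjoint A * A with htdef
  set t' : H →L[ℂ] H := A * adjoint A with ht'def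
  have hcont1 : Continuous fun s : ℝ => Real.sqrt s + ε :=
    Real.continuous_sqrt.add continuous_const
  have hne : ∀ s : ℝ, Real.sqrt s + ε ≠ 0 := fun s => by positivity
  have hcontg : Continuous fun s : ℝ => (Real.sqrt s + ε)⁻¹ := hcont1.inv₀ hne
  set c : H →L[ℂ] H := cfc (fun s => Real.sqrt s + ε) t with hcdef
  set d : H →L[ℂ] H := cfc (fun s => (Real.sqrt s + ε)⁻¹) t with hddef
  have hcd : c * d = 1 := by
    rw [hcdef, hddef, ← cfc_mul _ _ t hcont1.continuousOn hcontg.continuousOn]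
    calc cfc (fun s => (Real.sqrt s + ε) * (Real.sqrt s + ε)⁻¹) t
        = cfc (fun _ : ℝ => (1:ℝ)) t := cfc_congr fun s _ => mul_inv_cancel₀ (hne s)
      _ = 1 := cfc_one ℝ t
  have hdc : d * c = 1 := by
    rw [hcdef, hddef, ← cfc_mul _ _ t hcontg.continuousOn hcont1.continuousOn]
    calc cfc (fun s => (Real.sqrt s + ε)⁻¹ * (Real.sqrt s + ε)) t
        = cfc (fun _ : ℝ => (1:ℝ)) t := cfc_congr fun s _ => inv_mul_cancel₀ (hne s)
      _ = 1 := cfc_one ℝ t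
  have hd_sa : IsSelfAdjoint d := cfc_predicate _ t
  have hint : A * d = cfc (fun s => (Real.sqrt s + ε)⁻¹) t' * A := my_cfc_intertwine A _ hcontg
  have h5 : A * d * adjoint A ≤ opAbs (adjoint A) := by
    have he : A * d * adjoint A = cfc (fun s => (Real.sqrt s + ε)⁻¹) t' * t' := by
      rw [hint, mul_assoc]
    have hmul : cfc (fun s : ℝ => (Real.sqrt s + ε)⁻¹ * s) t'
        = cfc (fun s => (Real.sqrt s + ε)⁻¹) t' * cfc (fun s : ℝ => s) t' :=
      cfc_mul _ _ t' hcontg.continuousOn continuous_id.continuousOn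
    have hmul2 : cfc (fun s : ℝ => (Real.sqrt s + ε)⁻¹ * s) t'
        = cfc (fun s => (Real.sqrt s + ε)⁻¹) t' * t' := by
      rw [hmul, cfc_id' ℝ t' hysa]
    rw [he, ← hmul2, my_opAbs_adjoint_eq_cfc]
    refine cfc_mono (fun s hs => ?_) (hcontg.mul continuous_id).continuousOn
      Real.continuous_sqrt.continuousOn
    have h0s : 0 ≤ s := spectrum_nonneg_of_nonneg ht' hs
    rw [inv_mul_le_iff₀ (by positivity)]
    nlinarith [Real.sq_sqrt h0s, Real.sqrt_nonneg s, hε.le]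
  have hc_nonneg : (0:H →L[ℂ] H) ≤ c :=
    cfc_nonneg fun s _ => by positivity
  set D : H →L[ℂ] H := 1 - A * d with hDdef
  have hpos : (0:H →L[ℂ] H) ≤ D * c * star D := star_right_conjugate_nonneg hc_nonneg D
  have hstarD : star D = 1 - d * adjoint A := by
    rw [hDdef, star_sub, star_one, star_mul, hd_sa.star_eq, star_eq_adjoint]
  have hAdc : A * d * c = A := by rw [mul_assoc, hdc, mul_one]
  have e2 : c * (d * adjoint A) = adjoint A := by rw [← mul_assoc, hcd, one_mul]
  have hexp : D * c * star D = c - A - adjoint A + A * d * adjoint A := by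
    rw [hstarD, hDdef]
    have e1 : (1 - A * d) * c = c - A := by rw [sub_mul, one_mul, hAdc]
    rw [e1]
    calc (c - A) * (1 - d * adjoint A)
        = c * 1 - c * (d * adjoint A) - (A * 1 - A * (d * adjoint A)) := by
          rw [sub_mul, mul_sub, mul_sub]
      _ = c - A - adjoint A + A * d * adjoint A := by
          rw [mul_one, mul_one, e2, ← mul_assoc]; abel
  have hfin : A + adjoint A ≤ c + A * d * adjoint A := by
    rw [hexp] at hpos
    have h6 : c - A - adjoint A + A * d * adjoint A
        = (c + A * d * adjoint A) - (A + adjoint A) := by abel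
    rw [h6] at hpos
    exact sub_nonneg.mp hpos
  have hceq : c = opAbs A + ε • (1:H →L[ℂ] H) := by
    rw [hcdef, cfc_add t Real.sqrt (fun _ => ε) Real.continuous_sqrt.continuousOn
      continuousOn_const, cfc_const ε t hxsa, my_opAbs_eq_cfc, Algebra.algebraMap_eq_smul_one]
  calc A + adjoint A ≤ c + A * d * adjoint A := hfin
    _ ≤ (opAbs A + ε • 1) + opAbs (adjoint A) := by
        rw [hceq]; exact add_le_add_right h5 _
    _ = opAbs A + opAbs (adjoint A) + ε • 1 := by abel

lemma my_inner_re_le_of_le {S T : H →L[ℂ] H} (h : S ≤ T) (x : H) :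
    (⟪S x, x⟫_ℂ).re ≤ (⟪T x, x⟫_ℂ).re := by
  rw [ContinuousLinearMap.le_def] at h
  have := h.inner_nonneg_left x
  rw [ContinuousLinearMap.sub_apply, inner_sub_left] at this
  have := (Complex.le_def.mp this).1
  simp only [Complex.zero_re, Complex.sub_re] at this
  linarith

lemma my_inner_nonneg {T : H →L[ℂ] H} (h : 0 ≤ T) (x : H) : 0 ≤ (⟪T x, x⟫_ℂ).re := by
  have := my_inner_re_le_of_le h x
  simpa using this

lemma my_selfadjoint_inner_real {T : H →L[ℂ] H} (h : IsSelfAdjoint T) (x : H) :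
    (⟪T x, x⟫_ℂ).im = 0 := by
  have h1 : adjoint T = T := ContinuousLinearMap.isSelfAdjoint_iff'.mp h
  have h2 : ⟪T x, x⟫_ℂ = ⟪x, T x⟫_ℂ := by
    conv_lhs => rw [← h1]
    exact ContinuousLinearMap.adjoint_inner_left T x x
  have h3 : (starRingEnd ℂ) ⟪T x, x⟫_ℂ = ⟪T x, x⟫_ℂ := by
    rw [inner_conj_symm]; exact h2.symm
  exact Complex.conj_eq_iff_im.mp h3

lemma my_kato_vec (A : H →L[ℂ] H) (x : H) (hx : ‖x‖ = 1) :
    2 * ‖⟪A x, x⟫_ℂ‖ ≤ (⟪(opAbs A + opAbs (adjoint A)) x, x⟫_ℂ).re := by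
  have key : ∀ B : H →L[ℂ] H, adjoint B * B = adjoint A * A →
      B * adjoint B = A * adjoint A →
      2 * (⟪B x, x⟫_ℂ).re ≤ (⟪(opAbs A + opAbs (adjoint A)) x, x⟫_ℂ).re := by
    intro B h1 h2
    refine le_of_forall_pos_le_add fun ε hε => ?_
    have hop := my_kato_op B (ε := ε) hε
    have hOA : opAbs B = opAbs A := by rw [opAbs, opAbs, h1]
    have hOA' : opAbs (adjoint B) = opAbs (adjoint A) := by
      rw [my_opAbs_adjoint_eq_cfc, my_opAbs_adjoint_eq_cfc, h2]
    rw [hOA, hOA'] at hop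
    have hv := my_inner_re_le_of_le hop x
    have hlhs : (⟪(B + adjoint B) x, x⟫_ℂ).re = 2 * (⟪B x, x⟫_ℂ).re := by
      rw [ContinuousLinearMap.add_apply, inner_add_left, Complex.add_re]
      have : ⟪(adjoint B) x, x⟫_ℂ = (starRingEnd ℂ) ⟪B x, x⟫_ℂ := by
        rw [ContinuousLinearMap.adjoint_inner_left, inner_conj_symm]
      rw [this, Complex.conj_re]; ring
    have hrhs : (⟪((opAbs A + opAbs (adjoint A)) + ε • (1:H →L[ℂ] H)) x, x⟫_ℂ).re
        = (⟪(opAbs A + opAbs (adjoint A)) x, x⟫_ℂ).re + ε := by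
      rw [ContinuousLinearMap.add_apply, inner_add_left, Complex.add_re]
      congr 1
      have h1x : (ε • (1:H →L[ℂ] H)) x = (ε : ℂ) • x := by
        rw [ContinuousLinearMap.smul_apply, ContinuousLinearMap.one_apply]
        simp [Complex.real_smul]
      rw [h1x, inner_smul_left]
      have : ⟪x, x⟫_ℂ = (1:ℂ) := by
        rw [inner_self_eq_norm_sq_to_K, hx]; norm_num
      rw [this]
      simp
    rw [hlhs] at hv
    rw [hrhs] at hv
    exact hv
  by_cases hu : ⟪A x, x⟫_ℂ = 0
  · rw [hu]
    simp only [norm_zero, mul_zero]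
    exact my_inner_nonneg (add_nonneg (my_opAbs_nonneg A) (my_opAbs_nonneg (adjoint A))) x
  · set u := ⟪A x, x⟫_ℂ with hu_def
    have habs : (0:ℝ) < ‖u‖ := by
      rw [norm_pos_iff]
      exact hu
    set w : ℂ := u / ((‖u‖ : ℝ) : ℂ) with hw
    have hcwu : (starRingEnd ℂ) w * u = ((‖u‖ : ℝ) : ℂ) := by
      rw [hw, map_div₀, Complex.conj_ofReal, div_mul_eq_mul_div]
      have : (starRingEnd ℂ) u * u = ((‖u‖ : ℝ) : ℂ) ^ 2 := by
        rw [mul_comm, Complex.mul_conj, Complex.normSq_eq_norm_sq]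
        push_cast
        ring
      rw [this]
      rw [sq, mul_div_assoc, div_self (by exact_mod_cast habs.ne'), mul_one]
    have hcw : (starRingEnd ℂ) w * w = 1 := by
      rw [hw, map_div₀, Complex.conj_ofReal, div_mul_div_comm]
      rw [mul_comm ((starRingEnd ℂ) u) u, Complex.mul_conj, Complex.normSq_eq_norm_sq]
      rw [← Complex.ofReal_mul, ← sq]
      rw [div_self]
      exact_mod_cast (pow_pos habs 2).ne'
    set B : H →L[ℂ] H := w • A with hB
    have hadjB : adjoint B = (starRingEnd ℂ) w • adjoint A := by
      rw [hB, ← star_eq_adjoint, ← star_eq_adjoint, star_smul]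
      rfl
    have h1 : adjoint B * B = adjoint A * A := by
      rw [hadjB, hB, smul_mul_assoc, mul_smul_comm, smul_smul, hcw, one_smul]
    have h2 : B * adjoint B = A * adjoint A := by
      rw [hadjB, hB, smul_mul_assoc, mul_smul_comm, smul_smul, mul_comm w, hcw, one_smul]
    have h3 := key B h1 h2
    have h4 : ⟪B x, x⟫_ℂ = (starRingEnd ℂ) w * u := by
      rw [hB, ContinuousLinearMap.smul_apply, inner_smul_left, hu_def]
    rw [h4, hcwu] at h3
    simpa using h3

lemma my_numeric (p q : ℝ) (hp : 0 ≤ p) (hq : 0 ≤ q) :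
    p/2 + q/2 ≤ (1/Real.sqrt 2) * Real.sqrt (p^2 + q^2) := by
  have h2 : (0:ℝ) < Real.sqrt 2 := Real.sqrt_pos.mpr two_pos
  rw [one_div, inv_mul_eq_div, le_div_iff₀ h2]
  have hsq : ((p/2+q/2) * Real.sqrt 2)^2 ≤ p^2 + q^2 := by
    have hs2 : (Real.sqrt 2)^2 = 2 := Real.sq_sqrt (by norm_num)
    nlinarith [sq_nonneg (p - q)]
  calc (p/2+q/2) * Real.sqrt 2 = Real.sqrt (((p/2+q/2) * Real.sqrt 2)^2) :=
        (Real.sqrt_sq (by positivity)).symm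
    _ ≤ Real.sqrt (p^2+q^2) := Real.sqrt_le_sqrt hsq

end Aux

theorem stmt_7 (A B : H →L[ℂ] H) :
    numRadius (A + B) ≤ (1 / Real.sqrt 2) *
      numRadius ((opAbs A + opAbs (adjoint A)) + Complex.I • (opAbs B + opAbs (adjoint B))) := by
  set P : H →L[ℂ] H := opAbs A + opAbs (adjoint A) with hP
  set Q : H →L[ℂ] H := opAbs B + opAbs (adjoint B) with hQ
  set R : H →L[ℂ] H := P + Complex.I • Q with hR
  cases isEmpty_or_nonempty {x : H // ‖x‖ = 1} with
  | inl h =>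
    rw [numRadius, numRadius, Real.iSup_of_isEmpty]
    norm_num
  | inr h =>
    have hPpos : (0:H →L[ℂ] H) ≤ P :=
      add_nonneg (my_opAbs_nonneg A) (my_opAbs_nonneg (adjoint A))
    have hQpos : (0:H →L[ℂ] H) ≤ Q :=
      add_nonneg (my_opAbs_nonneg B) (my_opAbs_nonneg (adjoint B))
    have hPsa : IsSelfAdjoint P := IsSelfAdjoint.of_nonneg hPpos
    have hQsa : IsSelfAdjoint Q := IsSelfAdjoint.of_nonneg hQpos
    have hbdd : BddAbove (Set.range fun x : {x : H // ‖x‖ = 1} =>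
        ‖⟪R x.1, x.1⟫_ℂ‖) := by
      refine ⟨‖R‖, ?_⟩
      rintro _ ⟨y, rfl⟩
      calc ‖⟪R y.1, y.1⟫_ℂ‖ ≤ ‖R y.1‖ * ‖y.1‖ := by
            exact norm_inner_le_norm _ _
        _ ≤ (‖R‖ * ‖y.1‖) * ‖y.1‖ := by
            have := R.le_opNorm y.1
            gcongr
        _ = ‖R‖ := by rw [y.2]; ring
    rw [numRadius]
    refine ciSup_le fun z => ?_
    set x := z.1 with hxdef
    have hx : ‖x‖ = 1 := z.2
    set p : ℝ := (⟪P x, x⟫_ℂ).re with hp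
    set q : ℝ := (⟪Q x, x⟫_ℂ).re with hq
    have hp0 : 0 ≤ p := my_inner_nonneg hPpos x
    have hq0 : 0 ≤ q := my_inner_nonneg hQpos x
    have hPz : ⟪P x, x⟫_ℂ = (p : ℂ) :=
      Complex.ext (by simp [hp]) (by simp [my_selfadjoint_inner_real hPsa x])
    have hQz : ⟪Q x, x⟫_ℂ = (q : ℂ) :=
      Complex.ext (by simp [hq]) (by simp [my_selfadjoint_inner_real hQsa x])
    have hRz : ⟪R x, x⟫_ℂ = (p : ℂ) - (q : ℂ) * Complex.I := by
      rw [hR, ContinuousLinearMap.add_apply, inner_add_left,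
        ContinuousLinearMap.smul_apply, inner_smul_left, hPz, hQz, Complex.conj_I]
      ring
    have habsR : ‖⟪R x, x⟫_ℂ‖ = Real.sqrt (p^2 + q^2) := by
      rw [hRz, Complex.norm_def, Complex.normSq_apply]
      have hre : ((p : ℂ) - (q : ℂ) * Complex.I).re = p := by simp
      have him : ((p : ℂ) - (q : ℂ) * Complex.I).im = -q := by simp
      rw [hre, him]
      ring_nf
    have hstep1 : ‖⟪(A + B) x, x⟫_ℂ‖ ≤ p/2 + q/2 := by
      have hkA := my_kato_vec A x hx
      have hkB := my_kato_vec B x hx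
      calc ‖⟪(A + B) x, x⟫_ℂ‖
          ≤ ‖⟪A x, x⟫_ℂ‖ + ‖⟪B x, x⟫_ℂ‖ := by
            rw [ContinuousLinearMap.add_apply, inner_add_left]
            exact norm_add_le _ _
        _ ≤ p/2 + q/2 := by
            rw [← hp] at hkA
            rw [← hq] at hkB
            linarith
    have hstep2 : p/2 + q/2 ≤ (1 / Real.sqrt 2) * ‖⟪R x, x⟫_ℂ‖ := by
      rw [habsR]
      exact my_numeric p q hp0 hq0
    have hstep3 : ‖⟪R x, x⟫_ℂ‖ ≤ numRadius R := by
      rw [numRadius]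
      exact le_ciSup hbdd z
    have hconst : (0:ℝ) ≤ 1 / Real.sqrt 2 := by positivity
    calc ‖⟪(A + B) x, x⟫_ℂ‖ ≤ p/2 + q/2 := hstep1
      _ ≤ (1 / Real.sqrt 2) * ‖⟪R x, x⟫_ℂ‖ := hstep2
      _ ≤ (1 / Real.sqrt 2) * numRadius R := by
          exact mul_le_mul_of_nonneg_left hstep3 hconst
end

section
/- If T is a bounded accretive-dissipative operator on a complex Hilbert space (i.e., both its real part (T+T*)/2 and imaginary part (T−T*)/(2i) are positive), then (1/√2)‖T‖ ≤ ω(T). -/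
open scoped InnerProductSpace
open ContinuousLinearMap

variable {H : Type*} [NormedAddCommGroup H] [InnerProductSpace ℂ H] [CompleteSpace H]

/-- A pre-inner-product core induced by a positive operator. -/
noncomputable def posCore (P : H →L[ℂ] H) (hP : P.IsPositive) :
    PreInnerProductSpace.Core ℂ H where
  inner a b := ⟪a, P b⟫_ℂ
  conj_inner_symm a b := by
    have hsymm : (P : H →ₗ[ℂ] H).IsSymmetric :=
      hP.1
    simpa using (inner_conj_symm (P a) b).trans (hsymm a b)
  re_inner_nonneg a := hP.re_inner_nonneg_right a
  add_left a b z := by simp [inner_add_left]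
  smul_left a b r := by simp [inner_smul_left]; ring

/-- Generalized Cauchy–Schwarz for a positive operator. -/
lemma posCS (P : H →L[ℂ] H) (hP : P.IsPositive) (x y : H) :
    ‖⟪P x, y⟫_ℂ‖ ^ 2 ≤ Complex.re ⟪P x, x⟫_ℂ * Complex.re ⟪P y, y⟫_ℂ := by
  have hsymm : (P : H →ₗ[ℂ] H).IsSymmetric := hP.1
  have key := InnerProductSpace.Core.inner_mul_inner_self_le (𝕜 := ℂ) (F := H)
    (c := posCore P hP) x y
  have e1 : @inner ℂ H (posCore P hP).toInner x y = ⟪x, P y⟫_ℂ := rfl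
  have e2 : @inner ℂ H (posCore P hP).toInner y x = ⟪y, P x⟫_ℂ := rfl
  have e3 : @inner ℂ H (posCore P hP).toInner x x = ⟪x, P x⟫_ℂ := rfl
  have e4 : @inner ℂ H (posCore P hP).toInner y y = ⟪y, P y⟫_ℂ := rfl
  rw [e1, e2, e3, e4] at key
  have hx : ⟪x, P y⟫_ℂ = ⟪P x, y⟫_ℂ := (hsymm x y).symm
  have hnorm : ‖⟪y, P x⟫_ℂ‖ = ‖⟪P x, y⟫_ℂ‖ := norm_inner_symm y (P x)
  rw [hx, hnorm] at key
  have hxx : (⟪P x, x⟫_ℂ : ℂ) = ⟪x, P x⟫_ℂ := hsymm x x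
  have hyy : (⟪P y, y⟫_ℂ : ℂ) = ⟪y, P y⟫_ℂ := hsymm y y
  rw [pow_two, hxx, hyy]
  exact key

lemma rePimP_decomp (T : H →L[ℂ] H) : reP T + Complex.I • imP T = T := by
  rw [reP, imP, smul_smul]
  have h2 : Complex.I * (2 * Complex.I)⁻¹ = (2:ℂ)⁻¹ := by
    rw [mul_inv]
    field_simp [Complex.I_ne_zero]
  rw [h2]
  module

theorem stmt_10 (T : H →L[ℂ] H) (h1 : (reP T).IsPositive) (h2 : (imP T).IsPositive) :
    (1 / Real.sqrt 2) * ‖T‖ ≤ numRadius T := by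
  set A := reP T with hA
  set B := imP T with hB
  have hTz : ∀ z, T z = A z + Complex.I • B z := by
    intro z
    conv_lhs => rw [← rePimP_decomp T]
    simp [hA, hB]
  have hAc := (ContinuousLinearMap.isPositive_iff_complex A).mp h1
  have hBc := (ContinuousLinearMap.isPositive_iff_complex B).mp h2
  have hbdd : BddAbove (Set.range fun x : {x : H // ‖x‖ = 1} =>
      ‖⟪T x.1, x.1⟫_ℂ‖) := by
    refine ⟨‖T‖, ?_⟩
    rintro _ ⟨x, rfl⟩
    calc ‖⟪T x.1, x.1⟫_ℂ‖ = ‖⟪T x.1, x.1⟫_ℂ‖ := rfl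
      _ ≤ ‖T x.1‖ * ‖x.1‖ := norm_inner_le_norm _ _
      _ ≤ (‖T‖ * ‖x.1‖) * ‖x.1‖ := by
          have := T.le_opNorm x.1
          nlinarith [norm_nonneg (x.1)]
      _ = ‖T‖ := by rw [x.2]; ring
  have hω0 : 0 ≤ numRadius T := Real.iSup_nonneg fun x => (norm_nonneg _)
  -- unit vector bound
  have hkeyu : ∀ u : H, ‖u‖ = 1 →
      Complex.re ⟪A u, u⟫_ℂ + Complex.re ⟪B u, u⟫_ℂ ≤ Real.sqrt 2 * numRadius T := by
    intro u hu
    obtain ⟨haR, ha0⟩ := hAc u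
    obtain ⟨hbR, hb0⟩ := hBc u
    set a := Complex.re ⟪A u, u⟫_ℂ with ha
    set b := Complex.re ⟪B u, u⟫_ℂ with hb
    have haR' : ((a : ℂ)) = ⟪A u, u⟫_ℂ := haR
    have hbR' : ((b : ℂ)) = ⟪B u, u⟫_ℂ := hbR
    have hip : ⟪T u, u⟫_ℂ = (a : ℂ) - Complex.I * (b : ℂ) := by
      rw [hTz u, inner_add_left, inner_smul_left, ← haR', ← hbR']
      simp [Complex.conj_I]
      ring
    have habs2 : ‖⟪T u, u⟫_ℂ‖ = Real.sqrt (a ^ 2 + b ^ 2) := by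
      rw [hip, Complex.norm_def, Complex.normSq_apply]
      norm_num [Complex.sub_re, Complex.sub_im, Complex.mul_re, Complex.mul_im]
      ring_nf
    have h1' : a + b ≤ Real.sqrt 2 * ‖⟪T u, u⟫_ℂ‖ := by
      have ha0' : (0:ℝ) ≤ a := ha0
      have hb0' : (0:ℝ) ≤ b := hb0
      rw [habs2, ← Real.sqrt_mul (by norm_num)]
      rw [show a + b = Real.sqrt ((a + b) ^ 2) from (Real.sqrt_sq (by linarith)).symm]
      apply Real.sqrt_le_sqrt
      nlinarith [sq_nonneg (a - b)]
    have h2' : ‖⟪T u, u⟫_ℂ‖ ≤ numRadius T := le_ciSup hbdd ⟨u, hu⟩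
    nlinarith [Real.sqrt_nonneg 2]
  -- general vector bound
  have hkey : ∀ z : H, Complex.re ⟪A z, z⟫_ℂ + Complex.re ⟪B z, z⟫_ℂ ≤
      Real.sqrt 2 * numRadius T * ‖z‖ ^ 2 := by
    intro z
    rcases eq_or_ne z 0 with rfl | hz
    · simp
    · have hr : (0:ℝ) < ‖z‖ := norm_pos_iff.mpr hz
      have hrC : ((‖z‖ : ℂ)) ≠ 0 := by
        simpa using hr.ne'
      set u : H := ((‖z‖ : ℂ))⁻¹ • z with hudef
      have hu : ‖u‖ = 1 := by
        rw [hudef, norm_smul, norm_inv]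
        simp [hr.ne']
      have hzu : z = ((‖z‖ : ℂ)) • u := by
        rw [hudef, smul_smul, mul_inv_cancel₀ hrC, one_smul]
      have scale : ∀ S : H →L[ℂ] H,
          Complex.re ⟪S z, z⟫_ℂ = ‖z‖ ^ 2 * Complex.re ⟪S u, u⟫_ℂ := by
        intro S
        conv_lhs => rw [hzu]
        rw [map_smul, inner_smul_left, inner_smul_right, Complex.conj_ofReal]
        rw [← mul_assoc, ← Complex.ofReal_mul, Complex.re_ofReal_mul]
        ring
      rw [scale A, scale B]
      have hk := hkeyu u hu
      nlinarith [sq_nonneg ‖z‖]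
  -- bilinear bound
  have hbil : ∀ x y : H, ‖⟪T x, y⟫_ℂ‖ ≤
      Real.sqrt 2 * numRadius T * (‖x‖ * ‖y‖) := by
    intro x y
    have h0ax : (0:ℝ) ≤ Complex.re ⟪A x, x⟫_ℂ := (hAc x).2
    have h0ay : (0:ℝ) ≤ Complex.re ⟪A y, y⟫_ℂ := (hAc y).2
    have h0bx : (0:ℝ) ≤ Complex.re ⟪B x, x⟫_ℂ := (hBc x).2
    have h0by : (0:ℝ) ≤ Complex.re ⟪B y, y⟫_ℂ := (hBc y).2
    have hcsA : ‖⟪A x, y⟫_ℂ‖ ≤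
        Real.sqrt (Complex.re ⟪A x, x⟫_ℂ) * Real.sqrt (Complex.re ⟪A y, y⟫_ℂ) := by
      rw [← Real.sqrt_mul h0ax]
      rw [show ‖⟪A x, y⟫_ℂ‖ = Real.sqrt (‖⟪A x, y⟫_ℂ‖ ^ 2) from
        (Real.sqrt_sq (norm_nonneg _)).symm]
      exact Real.sqrt_le_sqrt (posCS A h1 x y)
    have hcsB : ‖⟪B x, y⟫_ℂ‖ ≤
        Real.sqrt (Complex.re ⟪B x, x⟫_ℂ) * Real.sqrt (Complex.re ⟪B y, y⟫_ℂ) := by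
      rw [← Real.sqrt_mul h0bx]
      rw [show ‖⟪B x, y⟫_ℂ‖ = Real.sqrt (‖⟪B x, y⟫_ℂ‖ ^ 2) from
        (Real.sqrt_sq (norm_nonneg _)).symm]
      exact Real.sqrt_le_sqrt (posCS B h2 x y)
    have htri : ‖⟪T x, y⟫_ℂ‖ ≤ ‖⟪A x, y⟫_ℂ‖ + ‖⟪B x, y⟫_ℂ‖ := by
      rw [hTz x, inner_add_left, inner_smul_left]
      calc ‖⟪A x, y⟫_ℂ + (starRingEnd ℂ) Complex.I * ⟪B x, y⟫_ℂ‖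
          ≤ ‖⟪A x, y⟫_ℂ‖ + ‖(starRingEnd ℂ) Complex.I * ⟪B x, y⟫_ℂ‖ := norm_add_le _ _
        _ = ‖⟪A x, y⟫_ℂ‖ + ‖⟪B x, y⟫_ℂ‖ := by
            simp [Complex.conj_I]
    set ax := Complex.re ⟪A x, x⟫_ℂ
    set ay := Complex.re ⟪A y, y⟫_ℂ
    set bx := Complex.re ⟪B x, x⟫_ℂ
    set by' := Complex.re ⟪B y, y⟫_ℂ
    have step : Real.sqrt ax * Real.sqrt ay + Real.sqrt bx * Real.sqrt by' ≤
        Real.sqrt (ax + bx) * Real.sqrt (ay + by') := by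
      have e1 : Real.sqrt ax ^ 2 = ax := Real.sq_sqrt h0ax
      have e2 : Real.sqrt ay ^ 2 = ay := Real.sq_sqrt h0ay
      have e3 : Real.sqrt bx ^ 2 = bx := Real.sq_sqrt h0bx
      have e4 : Real.sqrt by' ^ 2 = by' := Real.sq_sqrt h0by
      have E1 : Real.sqrt (ax + bx) ^ 2 = ax + bx := Real.sq_sqrt (by linarith)
      have E2 : Real.sqrt (ay + by') ^ 2 = ay + by' := Real.sq_sqrt (by linarith)
      nlinarith [sq_nonneg (Real.sqrt ax * Real.sqrt by' - Real.sqrt bx * Real.sqrt ay),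
        Real.sqrt_nonneg ax, Real.sqrt_nonneg ay, Real.sqrt_nonneg bx, Real.sqrt_nonneg by',
        Real.sqrt_nonneg (ax + bx), Real.sqrt_nonneg (ay + by'),
        mul_nonneg (Real.sqrt_nonneg ax) (Real.sqrt_nonneg ay),
        mul_nonneg (Real.sqrt_nonneg bx) (Real.sqrt_nonneg by'),
        mul_nonneg (Real.sqrt_nonneg (ax + bx)) (Real.sqrt_nonneg (ay + by'))]
    have hc0 : (0:ℝ) ≤ Real.sqrt 2 * numRadius T :=
      mul_nonneg (Real.sqrt_nonneg 2) hω0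
    have hx' : Real.sqrt (ax + bx) ≤ Real.sqrt (Real.sqrt 2 * numRadius T) * ‖x‖ := by
      have h := Real.sqrt_le_sqrt (hkey x)
      rwa [Real.sqrt_mul hc0 (‖x‖ ^ 2), Real.sqrt_sq (norm_nonneg x)] at h
    have hy' : Real.sqrt (ay + by') ≤ Real.sqrt (Real.sqrt 2 * numRadius T) * ‖y‖ := by
      have h := Real.sqrt_le_sqrt (hkey y)
      rwa [Real.sqrt_mul hc0 (‖y‖ ^ 2), Real.sqrt_sq (norm_nonneg y)] at h
    calc ‖⟪T x, y⟫_ℂ‖ ≤ ‖⟪A x, y⟫_ℂ‖ + ‖⟪B x, y⟫_ℂ‖ := htri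
      _ ≤ Real.sqrt ax * Real.sqrt ay + Real.sqrt bx * Real.sqrt by' := by
          linarith
      _ ≤ Real.sqrt (ax + bx) * Real.sqrt (ay + by') := step
      _ ≤ (Real.sqrt (Real.sqrt 2 * numRadius T) * ‖x‖) *
            (Real.sqrt (Real.sqrt 2 * numRadius T) * ‖y‖) := by
          apply mul_le_mul hx' hy' (Real.sqrt_nonneg _) (by positivity)
      _ = (Real.sqrt (Real.sqrt 2 * numRadius T) * Real.sqrt (Real.sqrt 2 * numRadius T)) *
            (‖x‖ * ‖y‖) := by ring
      _ = Real.sqrt 2 * numRadius T * (‖x‖ * ‖y‖) := by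
          rw [Real.mul_self_sqrt hc0]
  -- operator norm bound
  have hTnorm : ‖T‖ ≤ Real.sqrt 2 * numRadius T := by
    refine ContinuousLinearMap.opNorm_le_bound T
      (mul_nonneg (Real.sqrt_nonneg 2) hω0) fun x => ?_
    rcases eq_or_ne (T x) 0 with h0 | h0
    · rw [h0, norm_zero]
      exact mul_nonneg (mul_nonneg (Real.sqrt_nonneg 2) hω0) (norm_nonneg x)
    · have hb := hbil x (T x)
      have hip : ‖⟪T x, T x⟫_ℂ‖ = ‖T x‖ ^ 2 := by
        rw [inner_self_eq_norm_sq_to_K (𝕜 := ℂ) (T x)]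
        simp [norm_pow]
      rw [hip] at hb
      have hTx : (0:ℝ) < ‖T x‖ := norm_pos_iff.mpr h0
      nlinarith
  have hs2 : (0:ℝ) < Real.sqrt 2 := by positivity
  calc (1 / Real.sqrt 2) * ‖T‖ ≤ (1 / Real.sqrt 2) * (Real.sqrt 2 * numRadius T) := by
        apply mul_le_mul_of_nonneg_left hTnorm (by positivity)
    _ = numRadius T := by
        field_simp
end

section
/- If A and B are bounded self-adjoint operators on a complex Hilbert space, then ‖A + B‖ ≤ √(ω(A + iB)² + 2‖A‖‖B‖) ≤ ‖A‖ + ‖B‖. -/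
open scoped InnerProductSpace
open ContinuousLinearMap

variable {H : Type*} [NormedAddCommGroup H] [InnerProductSpace ℂ H] [CompleteSpace H]

private lemma re_inner_self_eq (x : H) : (⟪x, x⟫_ℂ).re = ‖x‖ ^ 2 := by
  have := inner_self_eq_norm_sq (𝕜 := ℂ) x
  simpa [RCLike.re] using this

/-- Key lemma: a self-adjoint operator whose quadratic form is bounded by `M‖x‖²`
has norm at most `M`. -/
private lemma sa_norm_le (S : H →L[ℂ] H) (hS : IsSelfAdjoint S) {M : ℝ} (hM : 0 ≤ M)
    (h : ∀ x : H, |(⟪S x, x⟫_ℂ).re| ≤ M * ‖x‖ ^ 2) : ‖S‖ ≤ M := by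
  have hsym := ContinuousLinearMap.isSelfAdjoint_iff_isSymmetric.mp hS
  have key : ∀ u v : H, (⟪S u, v⟫_ℂ).re ≤ M / 2 * (‖u‖ ^ 2 + ‖v‖ ^ 2) := by
    intro u v
    have e1 : ⟪S (u + v), u + v⟫_ℂ
        = ⟪S u, u⟫_ℂ + ⟪S u, v⟫_ℂ + ⟪S v, u⟫_ℂ + ⟪S v, v⟫_ℂ := by
      simp [map_add, inner_add_left, inner_add_right]; ring
    have e2 : ⟪S (u - v), u - v⟫_ℂ
        = ⟪S u, u⟫_ℂ - ⟪S u, v⟫_ℂ - ⟪S v, u⟫_ℂ + ⟪S v, v⟫_ℂ := by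
      simp [map_sub, inner_sub_left, inner_sub_right]; ring
    have hre : (⟪S v, u⟫_ℂ).re = (⟪S u, v⟫_ℂ).re := by
      have hh : ⟪S v, u⟫_ℂ = (starRingEnd ℂ) ⟪S u, v⟫_ℂ := by
        rw [inner_conj_symm]; exact hsym v u
      rw [hh, Complex.conj_re]
    have h1 := (abs_le.mp (h (u + v))).2
    have h2 := neg_le_of_abs_le (h (u - v))
    have hp : ‖u + v‖ ^ 2 + ‖u - v‖ ^ 2 = 2 * (‖u‖ ^ 2 + ‖v‖ ^ 2) := by
      have := parallelogram_law_with_norm ℂ u v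
      nlinarith [this]
    have hr1 : (⟪S (u + v), u + v⟫_ℂ).re
        = (⟪S u, u⟫_ℂ).re + 2 * (⟪S u, v⟫_ℂ).re + (⟪S v, v⟫_ℂ).re := by
      rw [e1]; simp [hre]; ring
    have hr2 : (⟪S (u - v), u - v⟫_ℂ).re
        = (⟪S u, u⟫_ℂ).re - 2 * (⟪S u, v⟫_ℂ).re + (⟪S v, v⟫_ℂ).re := by
      rw [e2]; simp [hre]; ring
    nlinarith [h1, h2, hr1, hr2, hp]
  refine S.opNorm_le_bound hM (fun x => ?_)
  rcases eq_or_ne (S x) 0 with h0 | h0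
  · simp [h0, mul_nonneg hM (norm_nonneg x)]
  · have hSx : (0:ℝ) < ‖S x‖ := norm_pos_iff.mpr h0
    set y : H := ((‖x‖ / ‖S x‖ : ℝ) : ℂ) • S x with hy
    have hny : ‖y‖ = ‖x‖ := by
      rw [hy, norm_smul]
      simp [abs_div, abs_of_nonneg (norm_nonneg x), abs_of_pos hSx,
        div_mul_cancel₀ _ (ne_of_gt hSx)]
    have hiy : (⟪S x, y⟫_ℂ).re = ‖x‖ / ‖S x‖ * ‖S x‖ ^ 2 := by
      rw [hy, inner_smul_right]
      simp [re_inner_self_eq]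
      left; rw [← Complex.ofReal_pow, Complex.ofReal_re]
    have := key x y
    rw [hiy, hny] at this
    have hxSx : ‖x‖ * ‖S x‖ ≤ M * ‖x‖ ^ 2 := by
      have h3 : ‖x‖ / ‖S x‖ * ‖S x‖ ^ 2 = ‖x‖ * ‖S x‖ := by
        field_simp
      nlinarith [this]
    rcases eq_or_lt_of_le (norm_nonneg x) with hx0 | hx0
    · have : x = 0 := norm_eq_zero.mp hx0.symm
      simp [this] at h0
    · nlinarith [hxSx]

private lemma inner_real_of_sa (A : H →L[ℂ] H) (hA : IsSelfAdjoint A) (x : H) :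
    (⟪A x, x⟫_ℂ).im = 0 := by
  have hsym := ContinuousLinearMap.isSelfAdjoint_iff_isSymmetric.mp hA
  have h1 : ⟪A x, x⟫_ℂ = (starRingEnd ℂ) ⟪A x, x⟫_ℂ := by
    rw [inner_conj_symm]; exact hsym x x
  have h2 := congrArg Complex.im h1
  simp only [Complex.conj_im] at h2
  linarith

theorem stmt_14 (A B : H →L[ℂ] H) (hA : IsSelfAdjoint A) (hB : IsSelfAdjoint B) :
    ‖A + B‖ ≤ Real.sqrt (numRadius (A + Complex.I • B) ^ 2 + 2 * ‖A‖ * ‖B‖) ∧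
      Real.sqrt (numRadius (A + Complex.I • B) ^ 2 + 2 * ‖A‖ * ‖B‖) ≤ ‖A‖ + ‖B‖ := by
  set T := A + Complex.I • B with hT
  -- computation of the relevant inner products
  have hTx : ∀ x : H, ⟪T x, x⟫_ℂ
      = Complex.mk (⟪A x, x⟫_ℂ).re (-(⟪B x, x⟫_ℂ).re) := by
    intro x
    have hAim := inner_real_of_sa A hA x
    have hBim := inner_real_of_sa B hB x
    rw [hT]
    simp only [ContinuousLinearMap.add_apply, ContinuousLinearMap.smul_apply,
      inner_add_left, inner_smul_left]
    apply Complex.ext <;> simp [hAim, hBim]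
  have habs : ∀ x : H, (‖⟪T x, x⟫_ℂ‖) ^ 2
      = (⟪A x, x⟫_ℂ).re ^ 2 + (⟪B x, x⟫_ℂ).re ^ 2 := by
    intro x
    rw [hTx x, Complex.sq_norm, Complex.normSq_apply]
    simp; ring
  -- bounds |a| ≤ ‖A‖ on unit vectors
  have hbound : ∀ (C : H →L[ℂ] H) (x : H), ‖x‖ = 1 → |(⟪C x, x⟫_ℂ).re| ≤ ‖C‖ := by
    intro C x hx
    calc |(⟪C x, x⟫_ℂ).re| ≤ ‖⟪C x, x⟫_ℂ‖ := Complex.abs_re_le_norm _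
      _ ≤ ‖C x‖ * ‖x‖ := by simpa using norm_inner_le_norm (𝕜 := ℂ) (C x) x
      _ ≤ ‖C‖ * ‖x‖ * ‖x‖ := by
          gcongr; exact C.le_opNorm x
      _ = ‖C‖ := by rw [hx]; ring
  -- numerical radius facts
  have hbdd : BddAbove (Set.range fun x : {x : H // ‖x‖ = 1} =>
      ‖⟪T x.1, x.1⟫_ℂ‖) := by
    refine ⟨‖T‖, ?_⟩
    rintro _ ⟨x, rfl⟩
    calc ‖⟪T x.1, x.1⟫_ℂ‖ ≤ ‖T x.1‖ * ‖x.1‖ := by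
          simpa using norm_inner_le_norm (𝕜 := ℂ) (T x.1) x.1
      _ ≤ ‖T‖ * ‖x.1‖ * ‖x.1‖ := by gcongr; exact T.le_opNorm x.1
      _ ≤ ‖T‖ := by rw [x.2]; simp
  have hnum_ge : ∀ x : H, ‖x‖ = 1 → ‖⟪T x, x⟫_ℂ‖ ≤ numRadius T := by
    intro x hx
    exact le_ciSup hbdd ⟨x, hx⟩
  have hnum_nonneg : 0 ≤ numRadius T :=
    Real.iSup_nonneg fun x => norm_nonneg _
  set K := numRadius T ^ 2 + 2 * ‖A‖ * ‖B‖ with hK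
  have hKnn : 0 ≤ K := by
    have : 0 ≤ 2 * ‖A‖ * ‖B‖ := by positivity
    nlinarith [sq_nonneg (numRadius T)]
  constructor
  · -- first inequality
    have hunit : ∀ x : H, ‖x‖ = 1 → |(⟪(A + B) x, x⟫_ℂ).re| ≤ Real.sqrt K := by
      intro x hx
      set a := (⟪A x, x⟫_ℂ).re
      set b := (⟪B x, x⟫_ℂ).re
      have hsum : (⟪(A + B) x, x⟫_ℂ).re = a + b := by
        simp [ContinuousLinearMap.add_apply, inner_add_left]
        rfl
      have hab : a ^ 2 + b ^ 2 ≤ numRadius T ^ 2 := by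
        have h1 := hnum_ge x hx
        have h2 := habs x
        nlinarith [norm_nonneg ⟪T x, x⟫_ℂ]
      have ha := hbound A x hx
      have hb := hbound B x hx
      have hsq : (a + b) ^ 2 ≤ K := by
        have : a * b ≤ ‖A‖ * ‖B‖ := by
          calc a * b ≤ |a| * |b| := by
                calc a * b ≤ |a * b| := le_abs_self _
                  _ = |a| * |b| := abs_mul a b
            _ ≤ ‖A‖ * ‖B‖ :=
                mul_le_mul ha hb (abs_nonneg b) (norm_nonneg A)
        nlinarith
      rw [hsum]
      calc |a + b| = Real.sqrt ((a + b) ^ 2) := (Real.sqrt_sq_eq_abs _).symm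
        _ ≤ Real.sqrt K := Real.sqrt_le_sqrt hsq
    refine sa_norm_le (A + B) (hA.add hB) (Real.sqrt_nonneg K) (fun x => ?_)
    rcases eq_or_ne x 0 with rfl | hx0
    · simp
    · have hnx : (0:ℝ) < ‖x‖ := norm_pos_iff.mpr hx0
      set u : H := ((‖x‖⁻¹ : ℝ) : ℂ) • x with hu
      have hnu : ‖u‖ = 1 := by
        rw [hu, norm_smul]
        simp [abs_of_pos (inv_pos.mpr hnx), inv_mul_cancel₀ (ne_of_gt hnx)]
      have hcomp : (⟪(A + B) u, u⟫_ℂ).re = ‖x‖⁻¹ ^ 2 * (⟪(A + B) x, x⟫_ℂ).re := by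
        rw [hu]
        simp only [map_smul, inner_smul_left, inner_smul_right]
        simp [Complex.ext_iff]
        rw [inner_add_left, Complex.add_re]
        ring
      have := hunit u hnu
      rw [hcomp, abs_mul, abs_of_pos (by positivity : (0:ℝ) < ‖x‖⁻¹ ^ 2)] at this
      have h2 : |(⟪(A + B) x, x⟫_ℂ).re| ≤ Real.sqrt K * ‖x‖ ^ 2 := by
        have hinv : ‖x‖⁻¹ ^ 2 * ‖x‖ ^ 2 = 1 := by
          field_simp
        nlinarith [abs_nonneg ((⟪(A + B) x, x⟫_ℂ).re), Real.sqrt_nonneg K,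
          sq_nonneg (‖x‖⁻¹), sq_nonneg ‖x‖, this]
      linarith [h2]
  · -- second inequality
    have hnum_le : numRadius T ≤ Real.sqrt (‖A‖ ^ 2 + ‖B‖ ^ 2) := by
      apply Real.iSup_le _ (Real.sqrt_nonneg _)
      rintro ⟨x, hx⟩
      have h2 := habs x
      have ha := hbound A x hx
      have hb := hbound B x hx
      rw [show ‖⟪T x, x⟫_ℂ‖
          = Real.sqrt ((‖⟪T x, x⟫_ℂ‖) ^ 2) from
          (Real.sqrt_sq (norm_nonneg _)).symm, h2]
      apply Real.sqrt_le_sqrt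
      nlinarith [mul_self_le_mul_self (abs_nonneg (⟪A x, x⟫_ℂ).re) ha,
        mul_self_le_mul_self (abs_nonneg (⟪B x, x⟫_ℂ).re) hb,
        sq_abs (⟪A x, x⟫_ℂ).re, sq_abs (⟪B x, x⟫_ℂ).re]
    have hKle : K ≤ (‖A‖ + ‖B‖) ^ 2 := by
      have h1 : numRadius T ^ 2 ≤ ‖A‖ ^ 2 + ‖B‖ ^ 2 := by
        have := Real.sq_sqrt (by positivity : (0:ℝ) ≤ ‖A‖ ^ 2 + ‖B‖ ^ 2)
        nlinarith [hnum_le, hnum_nonneg, Real.sqrt_nonneg (‖A‖ ^ 2 + ‖B‖ ^ 2)]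
      nlinarith
    calc Real.sqrt K ≤ Real.sqrt ((‖A‖ + ‖B‖) ^ 2) := Real.sqrt_le_sqrt hKle
      _ = ‖A‖ + ‖B‖ := Real.sqrt_sq (by positivity)
end
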